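/- Let A ⊆ B(G_μ), B ⊆ B(G_ν) and C ⊆ B(G_ξ) be von Neumann algebras with cyclic and separating unit vectors Λ_μ, Λ_ν, Λ_ξ defining faithful normal states μ, ν, ξ. Let ω be a coupling of (A, μ) and (B, ν) with cyclic representation (H_ω, π_ω, Ω_ω), and ψ a coupling of (B, ν) and (C, ξ) with cyclic representation (K_ψ, φ_ψ, Ψ_ψ). Let H_μ and H_ν be the closures of π_ω(A ⊗ 1)Ω_ω and π_ω(1 ⊗ B′)Ω_ω in H_ω, let K_ν and K_ξ be the closures of φ_ψ(B ⊗ 1)Ψ_ψ and φ_ψ(1 ⊗ C′)Ψ_ψ in K_ψ, let P_ν and Q_ν be the orthogonal projections of H_ω onto H_ν and of K_ψ onto K_ν respectively, and let u_ν : G_ν → H_ν and v_ν : G_ν → K_ν be the unitaries with u_ν b′Λ_ν = π_ω(1 ⊗ b′)Ω_ω for b′ ∈ B′ and v_ν bΛ_ν = φ_ψ(b ⊗ 1)Ψ_ψ for b ∈ B. Then the composition ω ∘ ψ equals the product coupling μ ⊙ ξ′ if and only if the subspaces u_ν*[P_ν H_μ ⊖ ℂΩ_ω] and v_ν*[Q_ν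 K_ξ ⊖ ℂΨ_ψ] of G_ν are orthogonal. -/

import Mathlib

open scoped ComplexOrder

noncomputable section

noncomputable instance {H : Type} [NormedAddCommGroup H] [InnerProductSpace ℂ H]
    [CompleteSpace H] (A : VonNeumannAlgebra H) : Algebra ℂ ↥A :=
  inferInstanceAs (Algebra ℂ ↥A.toStarSubalgebra)

variable {Gm Gn Gx Hw Kp : Type}
  [NormedAddCommGroup Gm] [InnerProductSpace ℂ Gm] [CompleteSpace Gm]
  [NormedAddCommGroup Gn] [InnerProductSpace ℂ Gn] [CompleteSpace Gn]
  [NormedAddCommGroup Gx] [InnerProductSpace ℂ Gx] [CompleteSpace Gx]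
  [NormedAddCommGroup Hw] [InnerProductSpace ℂ Hw] [CompleteSpace Hw]
  [NormedAddCommGroup Kp] [InnerProductSpace ℂ Kp] [CompleteSpace Kp]

/-- A coupling of `(A, μ)` and `(B, ν)`: a state on the algebraic tensor product `A ⊙ B′`
(equivalently, a bilinear functional, positive on elements of the form `x* x`) whose
marginals are `μ` and `ν′`. -/
def IsCoupling {G₁ G₂ : Type}
    [NormedAddCommGroup G₁] [InnerProductSpace ℂ G₁] [CompleteSpace G₁]
    [NormedAddCommGroup G₂] [InnerProductSpace ℂ G₂] [CompleteSpace G₂]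
    (A : VonNeumannAlgebra G₁) (B : VonNeumannAlgebra G₂) (Λ₁ : G₁) (Λ₂ : G₂)
    (ω : ↥A →ₗ[ℂ] ↥B.commutant →ₗ[ℂ] ℂ) : Prop :=
  (∀ (n : ℕ) (a : Fin n → ↥A) (b : Fin n → ↥B.commutant),
      0 ≤ ∑ i, ∑ j, ω (star (a i) * a j) (star (b i) * b j)) ∧
  (∀ a : ↥A, ω a 1 = inner ℂ Λ₁ ((a : G₁ →L[ℂ] G₁) Λ₁)) ∧
  (∀ b : ↥B.commutant, ω 1 b = inner ℂ Λ₂ ((b : G₂ →L[ℂ] G₂) Λ₂))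

/-- Standing hypotheses on `(A, Λ)`: unit vector, cyclic and separating. -/
def Std {G : Type} [NormedAddCommGroup G] [InnerProductSpace ℂ G] [CompleteSpace G]
    (A : VonNeumannAlgebra G) (Λ : G) : Prop :=
  ‖Λ‖ = 1 ∧ Dense (Set.range fun a : ↥A => (a : G →L[ℂ] G) Λ) ∧
  (∀ a : ↥A, (a : G →L[ℂ] G) Λ = 0 → a = 0)


lemma vanish_closure {E : Type} [NormedAddCommGroup E] [InnerProductSpace ℂ E]
    (f : E →L[ℂ] ℂ) {s : Set E} (hgen : ∀ x ∈ s, f x = 0) {x : E}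
    (hx : x ∈ (Submodule.span ℂ s).topologicalClosure) : f x = 0 := by
  have h1 : (Submodule.span ℂ s : Set E) ⊆ {y | f y = 0} := by
    intro y hy
    induction hy using Submodule.span_induction with
    | mem z hz => exact hgen _ hz
    | zero => simp
    | add a b _ _ ha hb =>
        simp only [Set.mem_setOf_eq] at ha hb ⊢; simp [ha, hb]
    | smul c a _ ha =>
        simp only [Set.mem_setOf_eq] at ha ⊢; simp [ha]
  have h2 : closure (Submodule.span ℂ s : Set E) ⊆ {y | f y = 0} :=
    closure_minimal h1 (isClosed_eq f.continuous continuous_const)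
  exact h2 (by simpa [← Submodule.topologicalClosure_coe] using hx)

lemma isom_inner {E F : Type} [NormedAddCommGroup E] [InnerProductSpace ℂ E]
    [NormedAddCommGroup F] [InnerProductSpace ℂ F]
    (u : E →L[ℂ] F) (h : ∀ x, ‖u x‖ = ‖x‖) (x y : E) :
    (inner ℂ (u x) (u y) : ℂ) = inner ℂ x y :=
  LinearIsometry.inner_map_map ⟨(u : E →ₗ[ℂ] F), h⟩ x y

lemma adj_isom {E F : Type} [NormedAddCommGroup E] [InnerProductSpace ℂ E]
    [NormedAddCommGroup F] [InnerProductSpace ℂ F] [CompleteSpace E] [CompleteSpace F]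
    (u : E →L[ℂ] F) (h : ∀ x, ‖u x‖ = ‖x‖) (v : E) :
    (ContinuousLinearMap.adjoint u) (u v) = v := by
  refine ext_inner_right ℂ fun ζ => ?_
  rw [ContinuousLinearMap.adjoint_inner_left, isom_inner u h]

noncomputable instance {H : Type} [NormedAddCommGroup H] [InnerProductSpace ℂ H]
    [CompleteSpace H] (A : VonNeumannAlgebra H) : StarModule ℂ ↥A :=
  inferInstanceAs (StarModule ℂ ↥A.toStarSubalgebra)

set_option maxHeartbeats 2000000 in
set_option synthInstance.maxHeartbeats 400000 in
/-- `ω ∘ ψ = μ ⊙ ξ′` if and only if the subspaces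
`u_ν*[P_ν H_μ ⊖ ℂΩ_ω]` and `v_ν*[Q_ν K_ξ ⊖ ℂΨ_ψ]` of `G_ν` are orthogonal. -/
theorem composition_trivial_iff_orthogonal
    (A : VonNeumannAlgebra Gm) (B : VonNeumannAlgebra Gn) (C : VonNeumannAlgebra Gx)
    (Λm : Gm) (Λn : Gn) (Λx : Gx)
    (hA : Std A Λm) (hB : Std B Λn) (hC : Std C Λx)
    -- the couplings ω, ψ and their associated maps
    (ω : ↥A →ₗ[ℂ] ↥B.commutant →ₗ[ℂ] ℂ) (hω : IsCoupling A B Λm Λn ω)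
    (ψ : ↥B →ₗ[ℂ] ↥C.commutant →ₗ[ℂ] ℂ) (hψ : IsCoupling B C Λn Λx ψ)
    (Eω : ↥A → ↥B)
    (hEω : ∀ (a : ↥A) (b' : ↥B.commutant),
      ω a b' = inner ℂ Λn ((Eω a : Gn →L[ℂ] Gn) ((b' : Gn →L[ℂ] Gn) Λn)))
    (Eψ : ↥B → ↥C)
    (hEψ : ∀ (b : ↥B) (c' : ↥C.commutant),
      ψ b c' = inner ℂ Λx ((Eψ b : Gx →L[ℂ] Gx) ((c' : Gx →L[ℂ] Gx) Λx)))
    -- the composition `ω ∘ ψ`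
    (ωψ : ↥A →ₗ[ℂ] ↥C.commutant →ₗ[ℂ] ℂ)
    (hωψ : ∀ (a : ↥A) (c' : ↥C.commutant),
      ωψ a c' = inner ℂ Λx ((Eψ (Eω a) : Gx →L[ℂ] Gx) ((c' : Gx →L[ℂ] Gx) Λx)))
    -- a cyclic representation `(H_ω, π_ω, Ω_ω)` of `(A ⊙ B′, ω)`
    (π₁ : ↥A →⋆ₐ[ℂ] (Hw →L[ℂ] Hw)) (π₂ : ↥B.commutant →⋆ₐ[ℂ] (Hw →L[ℂ] Hw)) (Ωw : Hw)
    (hcommω : ∀ (a : ↥A) (b' : ↥B.commutant), Commute (π₁ a) (π₂ b'))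
    (hcycω : Dense (Submodule.span ℂ
      (Set.range fun p : ↥A × ↥B.commutant => π₁ p.1 (π₂ p.2 Ωw)) : Set Hw))
    (hrepω : ∀ (a : ↥A) (b' : ↥B.commutant), ω a b' = inner ℂ Ωw (π₁ a (π₂ b' Ωw)))
    -- a cyclic representation `(K_ψ, φ_ψ, Ψ_ψ)` of `(B ⊙ C′, ψ)`
    (φ₁ : ↥B →⋆ₐ[ℂ] (Kp →L[ℂ] Kp)) (φ₂ : ↥C.commutant →⋆ₐ[ℂ] (Kp →L[ℂ] Kp)) (Ψp : Kp)
    (hcommψ : ∀ (b : ↥B) (c' : ↥C.commutant), Commute (φ₁ b) (φ₂ c'))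
    (hcycψ : Dense (Submodule.span ℂ
      (Set.range fun p : ↥B × ↥C.commutant => φ₁ p.1 (φ₂ p.2 Ψp)) : Set Kp))
    (hrepψ : ∀ (b : ↥B) (c' : ↥C.commutant), ψ b c' = inner ℂ Ψp (φ₁ b (φ₂ c' Ψp)))
    -- the subspaces `H_μ`, `H_ν` of `H_ω` and `K_ν`, `K_ξ` of `K_ψ`
    (Hμs Hνs : Submodule ℂ Hw) (Kνs Kξs : Submodule ℂ Kp)
    (hHμs : Hμs = (Submodule.span ℂ (Set.range fun a : ↥A => π₁ a Ωw)).topologicalClosure)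
    (hHνs : Hνs =
      (Submodule.span ℂ (Set.range fun b' : ↥B.commutant => π₂ b' Ωw)).topologicalClosure)
    (hKνs : Kνs = (Submodule.span ℂ (Set.range fun b : ↥B => φ₁ b Ψp)).topologicalClosure)
    (hKξs : Kξs =
      (Submodule.span ℂ (Set.range fun c' : ↥C.commutant => φ₂ c' Ψp)).topologicalClosure)
    -- the orthogonal projections `P_ν : H_ω → H_ν` and `Q_ν : K_ψ → K_ν`
    (Pν : Hw →L[ℂ] Hw)
    (hPν₁ : ∀ x : Hw, Pν x ∈ Hνs)
    (hPν₂ : ∀ x : Hw, ∀ v ∈ Hνs, (inner ℂ (x - Pν x) v : ℂ) = 0)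
    (Qν : Kp →L[ℂ] Kp)
    (hQν₁ : ∀ y : Kp, Qν y ∈ Kνs)
    (hQν₂ : ∀ y : Kp, ∀ v ∈ Kνs, (inner ℂ (y - Qν y) v : ℂ) = 0)
    -- the unitaries `u_ν : G_ν → H_ν ⊆ H_ω` and `v_ν : G_ν → K_ν ⊆ K_ψ`
    (uν : Gn →L[ℂ] Hw) (huνiso : ∀ ξ : Gn, ‖uν ξ‖ = ‖ξ‖)
    (huν : ∀ b' : ↥B.commutant, uν ((b' : Gn →L[ℂ] Gn) Λn) = π₂ b' Ωw)
    (huνrange : Set.range uν = (Hνs : Set Hw))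
    (vν : Gn →L[ℂ] Kp) (hvνiso : ∀ ξ : Gn, ‖vν ξ‖ = ‖ξ‖)
    (hvν : ∀ b : ↥B, vν ((b : Gn →L[ℂ] Gn) Λn) = φ₁ b Ψp)
    (hvνrange : Set.range vν = (Kνs : Set Kp)) :
    -- `ω ∘ ψ = μ ⊙ ξ′` iff `u_ν*[P_ν H_μ ⊖ ℂΩ_ω] ⊥ v_ν*[Q_ν K_ξ ⊖ ℂΨ_ψ]`
    ((∀ (a : ↥A) (c' : ↥C.commutant),
        ωψ a c' = inner ℂ Λm ((a : Gm →L[ℂ] Gm) Λm) * inner ℂ Λx ((c' : Gx →L[ℂ] Gx) Λx)) ↔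
      (∀ ξ₁ ∈ (ContinuousLinearMap.adjoint uν) ''
            {w : Hw | (∃ x ∈ Hμs, w = Pν x) ∧ (inner ℂ Ωw w : ℂ) = 0},
        ∀ ξ₂ ∈ (ContinuousLinearMap.adjoint vν) ''
            {w : Kp | (∃ y ∈ Kξs, w = Qν y) ∧ (inner ℂ Ψp w : ℂ) = 0},
        (inner ℂ ξ₁ ξ₂ : ℂ) = 0)) := by
  obtain ⟨hω0, hω1, hω2⟩ := hω
  obtain ⟨hψ0, hψ1, hψ2⟩ := hψ
  -- Basic facts
  have hΛm1 : (inner ℂ Λm Λm : ℂ) = 1 := by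
    rw [inner_self_eq_norm_sq_to_K, hA.1]; norm_num
  have hΛn1 : (inner ℂ Λn Λn : ℂ) = 1 := by
    rw [inner_self_eq_norm_sq_to_K, hB.1]; norm_num
  have huadj : ∀ v : Gn, (ContinuousLinearMap.adjoint uν) (uν v) = v := adj_isom uν huνiso
  have hvadj : ∀ v : Gn, (ContinuousLinearMap.adjoint vν) (vν v) = v := adj_isom vν hvνiso
  have hΩ : Ωw = uν Λn := by
    have h := huν 1
    simp only [OneMemClass.coe_one, ContinuousLinearMap.one_apply, map_one] at h
    exact h.symm
  have hΨ : Ψp = vν Λn := by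
    have h := hvν 1
    simp only [OneMemClass.coe_one, ContinuousLinearMap.one_apply, map_one] at h
    exact h.symm
  have hΩmem : Ωw ∈ Hνs := by
    rw [hΩ, ← SetLike.mem_coe, ← huνrange]; exact Set.mem_range_self Λn
  have hΨmem : Ψp ∈ Kνs := by
    rw [hΨ, ← SetLike.mem_coe, ← hvνrange]; exact Set.mem_range_self Λn
  have hΩΩ : (inner ℂ Ωw Ωw : ℂ) = 1 := by
    have h1 := hrepω 1 1
    have h2 := hω1 1
    simp only [map_one, ContinuousLinearMap.one_apply, OneMemClass.coe_one] at h1 h2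
    rw [← h1, h2, hΛm1]
  have hΨΨ : (inner ℂ Ψp Ψp : ℂ) = 1 := by
    have h1 := hrepψ 1 1
    have h2 := hψ1 1
    simp only [map_one, ContinuousLinearMap.one_apply, OneMemClass.coe_one] at h1 h2
    rw [← h1, h2, hΛn1]
  have hΩ1 : ω 1 1 = 1 := by
    have h2 := hω1 1
    simp only [OneMemClass.coe_one, ContinuousLinearMap.one_apply] at h2
    rw [h2, hΛm1]
  -- hermitianity of ω
  have herm : ∀ (a : ↥A) (b' : ↥B.commutant),
      ω (star a) (star b') = starRingEnd ℂ (ω a b') := by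
    have expand : ∀ (x : ↥A) (y : ↥B.commutant), (∑ i : Fin 2, ∑ j : Fin 2,
        ω (star (![1,x] i) * ![1,x] j) (star (![1,y] i) * ![1,y] j))
        = ω 1 1 + ω x y + (ω (star x) (star y) + ω (star x * x) (star y * y)) := by
      intro x y
      rw [Fin.sum_univ_two, Fin.sum_univ_two, Fin.sum_univ_two]
      simp only [Matrix.cons_val_zero, Matrix.cons_val_one, Matrix.head_cons, star_one,
        one_mul, mul_one]
    intro a b'
    have hrim : (ω (star a * a) (star b' * b')).im = 0 := by
      have h := hω0 1 ![a] ![b']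
      simp only [Fin.sum_univ_one, Matrix.cons_val_zero] at h
      exact ((Complex.le_def.mp h).2).symm
    have h2 := hω0 2 ![1, a] ![1, b']
    rw [expand, hΩ1] at h2
    have h3 := hω0 2 ![1, Complex.I • a] ![1, b']
    rw [expand, hΩ1] at h3
    have e2 : star (Complex.I • a) = (-Complex.I) • star a := by
      rw [star_smul, Complex.star_def, Complex.conj_I]
    rw [e2, smul_mul_assoc, mul_smul_comm, smul_smul, map_smul, map_smul, map_smul,
      LinearMap.smul_apply, LinearMap.smul_apply, LinearMap.smul_apply, smul_eq_mul,
      smul_eq_mul, smul_eq_mul] at h3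
    simp only [neg_mul, Complex.I_mul_I, neg_neg, one_mul] at h3
    have h2im := (Complex.le_def.mp h2).2
    have h3im := (Complex.le_def.mp h3).2
    simp only [Complex.add_im, Complex.one_im, Complex.zero_im, Complex.mul_im,
      Complex.I_re, Complex.I_im, Complex.neg_im, Complex.neg_re, Complex.mul_re,
      hrim] at h2im h3im
    apply Complex.ext
    · simp only [Complex.conj_re]; linarith
    · simp only [Complex.conj_im]; linarith
  -- adjoint kills the orthogonal complement of Hν / Kν
  have hHνker : ∀ w : Hw, (∀ b' : ↥B.commutant, (inner ℂ (π₂ b' Ωw) w : ℂ) = 0) →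
      (ContinuousLinearMap.adjoint uν) w = 0 := by
    intro w hw
    have hall : ∀ s ∈ Hνs, (inner ℂ w s : ℂ) = 0 := by
      intro s hs
      refine vanish_closure (innerSL ℂ w) ?_ (hHνs ▸ hs)
      rintro z ⟨b', rfl⟩
      have := congrArg (starRingEnd ℂ) (hw b')
      rw [inner_conj_symm, map_zero] at this
      simpa using this
    have h0 : (inner ℂ ((ContinuousLinearMap.adjoint uν) w)
        ((ContinuousLinearMap.adjoint uν) w) : ℂ) = 0 := by
      rw [ContinuousLinearMap.adjoint_inner_left]
      refine hall _ ?_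
      rw [← SetLike.mem_coe, ← huνrange]; exact Set.mem_range_self _
    exact inner_self_eq_zero.mp h0
  have hKνker : ∀ w : Kp, (∀ b : ↥B, (inner ℂ (φ₁ b Ψp) w : ℂ) = 0) →
      (ContinuousLinearMap.adjoint vν) w = 0 := by
    intro w hw
    have hall : ∀ s ∈ Kνs, (inner ℂ w s : ℂ) = 0 := by
      intro s hs
      refine vanish_closure (innerSL ℂ w) ?_ (hKνs ▸ hs)
      rintro z ⟨b, rfl⟩
      have := congrArg (starRingEnd ℂ) (hw b)
      rw [inner_conj_symm, map_zero] at this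
      simpa using this
    have h0 : (inner ℂ ((ContinuousLinearMap.adjoint vν) w)
        ((ContinuousLinearMap.adjoint vν) w) : ℂ) = 0 := by
      rw [ContinuousLinearMap.adjoint_inner_left]
      refine hall _ ?_
      rw [← SetLike.mem_coe, ← hvνrange]; exact Set.mem_range_self _
    exact inner_self_eq_zero.mp h0
  -- adjoint composed with the projections
  have huadjP : ∀ z : Hw, (ContinuousLinearMap.adjoint uν) (Pν z)
      = (ContinuousLinearMap.adjoint uν) z := by
    intro z
    have h0 : (ContinuousLinearMap.adjoint uν) (z - Pν z) = 0 := by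
      have h1 : (inner ℂ ((ContinuousLinearMap.adjoint uν) (z - Pν z))
          ((ContinuousLinearMap.adjoint uν) (z - Pν z)) : ℂ) = 0 := by
        rw [ContinuousLinearMap.adjoint_inner_left]
        refine hPν₂ z _ ?_
        rw [← SetLike.mem_coe, ← huνrange]; exact Set.mem_range_self _
      exact inner_self_eq_zero.mp h1
    rw [map_sub, sub_eq_zero] at h0
    exact h0.symm
  have hvadjQ : ∀ z : Kp, (ContinuousLinearMap.adjoint vν) (Qν z)
      = (ContinuousLinearMap.adjoint vν) z := by
    intro z
    have h0 : (ContinuousLinearMap.adjoint vν) (z - Qν z) = 0 := by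
      have h1 : (inner ℂ ((ContinuousLinearMap.adjoint vν) (z - Qν z))
          ((ContinuousLinearMap.adjoint vν) (z - Qν z)) : ℂ) = 0 := by
        rw [ContinuousLinearMap.adjoint_inner_left]
        refine hQν₂ z _ ?_
        rw [← SetLike.mem_coe, ← hvνrange]; exact Set.mem_range_self _
      exact inner_self_eq_zero.mp h1
    rw [map_sub, sub_eq_zero] at h0
    exact h0.symm
  have hΩP : ∀ z : Hw, (inner ℂ Ωw (Pν z) : ℂ) = inner ℂ Ωw z := by
    intro z
    have h := hPν₂ z Ωw hΩmem
    have h2 := congrArg (starRingEnd ℂ) h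
    rw [inner_conj_symm, map_zero, inner_sub_right, sub_eq_zero] at h2
    exact h2.symm
  have hΨQ : ∀ z : Kp, (inner ℂ Ψp (Qν z) : ℂ) = inner ℂ Ψp z := by
    intro z
    have h := hQν₂ z Ψp hΨmem
    have h2 := congrArg (starRingEnd ℂ) h
    rw [inner_conj_symm, map_zero, inner_sub_right, sub_eq_zero] at h2
    exact h2.symm
  have huadjΩ : (ContinuousLinearMap.adjoint uν) Ωw = Λn := by rw [hΩ, huadj]
  have hvadjΨ : (ContinuousLinearMap.adjoint vν) Ψp = Λn := by rw [hΨ, hvadj]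
  have hcoesB : ∀ b : ↥B, ((star b : ↥B) : Gn →L[ℂ] Gn) = star (b : Gn →L[ℂ] Gn) :=
    fun b => rfl
  have hΩπ : ∀ a : ↥A, (inner ℂ Ωw (π₁ a Ωw) : ℂ) = ω a 1 := by
    intro a
    have h := hrepω a 1
    simp only [map_one, ContinuousLinearMap.one_apply] at h
    exact h.symm
  have hΨφ : ∀ c' : ↥C.commutant, (inner ℂ Ψp (φ₂ c' Ψp) : ℂ) = ψ 1 c' := by
    intro c'
    have h := hrepψ 1 c'
    simp only [map_one, ContinuousLinearMap.one_apply] at h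
    exact h.symm
  -- the key adjoint identity : uν* (π₁ (star a) Ωw) = (Eω a)* Λn
  have hI2 : ∀ a : ↥A, (ContinuousLinearMap.adjoint uν) (π₁ (star a) Ωw)
      = ((star (Eω a) : ↥B) : Gn →L[ℂ] Gn) Λn := by
    intro a
    have key : ∀ b' : ↥B.commutant,
        (inner ℂ (π₂ b' Ωw) (π₁ (star a) Ωw
          - uν (((star (Eω a) : ↥B) : Gn →L[ℂ] Gn) Λn)) : ℂ) = 0 := by
      intro b'
      rw [inner_sub_right, sub_eq_zero]
      have l1 : (inner ℂ (π₂ b' Ωw) (π₁ (star a) Ωw) : ℂ) = ω (star a) (star b') := by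
        have hπadj : π₂ b' = ContinuousLinearMap.adjoint (π₂ (star b')) := by
          rw [← ContinuousLinearMap.star_eq_adjoint, ← map_star, star_star]
        rw [hπadj, ContinuousLinearMap.adjoint_inner_left]
        have hc : π₂ (star b') (π₁ (star a) Ωw) = π₁ (star a) (π₂ (star b') Ωw) := by
          have := congrArg (fun T : Hw →L[ℂ] Hw => T Ωw) (hcommω (star a) (star b')).symm
          simpa only [ContinuousLinearMap.mul_apply] using this
        rw [hc, ← hrepω]
      have l2 : (inner ℂ (π₂ b' Ωw)
          (uν (((star (Eω a) : ↥B) : Gn →L[ℂ] Gn) Λn)) : ℂ) = ω (star a) (star b') := by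
        rw [← huν b', isom_inner uν huνiso, hcoesB, ContinuousLinearMap.star_eq_adjoint,
          ContinuousLinearMap.adjoint_inner_right, ← inner_conj_symm, ← hEω a b']
        exact (herm a b').symm
      rw [l1, l2]
    have h0 := hHνker _ key
    rw [map_sub, huadj, sub_eq_zero] at h0
    exact h0
  -- the maps R and S
  set Ru : Hw →L[ℂ] Gn := (ContinuousLinearMap.adjoint uν).comp
      (ContinuousLinearMap.id ℂ Hw - (innerSL ℂ Ωw).smulRight Ωw) with hRudef
  set Sv : Kp →L[ℂ] Gn := (ContinuousLinearMap.adjoint vν).comp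
      (ContinuousLinearMap.id ℂ Kp - (innerSL ℂ Ψp).smulRight Ψp) with hSvdef
  have hRapp : ∀ x : Hw, Ru x
      = (ContinuousLinearMap.adjoint uν) x - (inner ℂ Ωw x : ℂ) • Λn := by
    intro x
    simp only [hRudef, ContinuousLinearMap.comp_apply, ContinuousLinearMap.sub_apply,
      ContinuousLinearMap.id_apply, ContinuousLinearMap.smulRight_apply, innerSL_apply_apply,
      map_sub, map_smul, huadjΩ]
  have hSapp : ∀ y : Kp, Sv y
      = (ContinuousLinearMap.adjoint vν) y - (inner ℂ Ψp y : ℂ) • Λn := by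
    intro y
    simp only [hSvdef, ContinuousLinearMap.comp_apply, ContinuousLinearMap.sub_apply,
      ContinuousLinearMap.id_apply, ContinuousLinearMap.smulRight_apply, innerSL_apply_apply,
      map_sub, map_smul, hvadjΨ]
  have hRapp2 : ∀ x : Hw,
      (ContinuousLinearMap.adjoint uν) (x - (inner ℂ Ωw x : ℂ) • Ωw) = Ru x := by
    intro x; rw [map_sub, map_smul, huadjΩ, hRapp]
  have hSapp2 : ∀ y : Kp,
      (ContinuousLinearMap.adjoint vν) (y - (inner ℂ Ψp y : ℂ) • Ψp) = Sv y := by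
    intro y; rw [map_sub, map_smul, hvadjΨ, hSapp]
  have hμν : ∀ a : ↥A, ψ (Eω a) 1 = ω a 1 := by
    intro a
    have h1 := hψ1 (Eω a)
    have h2 := hEω a 1
    simp only [OneMemClass.coe_one, ContinuousLinearMap.one_apply] at h2
    rw [h1, h2]
  have hφadj : ∀ b : ↥B, φ₁ (star b) = ContinuousLinearMap.adjoint (φ₁ b) := by
    intro b
    rw [← ContinuousLinearMap.star_eq_adjoint, ← map_star]
  -- the key identity
  have hkey : ∀ (a : ↥A) (c' : ↥C.commutant),
      (inner ℂ (Ru (π₁ (star a) Ωw)) (Sv (φ₂ c' Ψp)) : ℂ)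
        = ωψ a c' - ω a 1 * ψ 1 c' := by
    intro a c'
    have hx1 : Ru (π₁ (star a) Ωw)
        = ((star (Eω a) : ↥B) : Gn →L[ℂ] Gn) Λn - (starRingEnd ℂ (ω a 1)) • Λn := by
      rw [hRapp, hI2, hΩπ (star a)]
      congr 2
      have hh := herm a 1
      rwa [star_one] at hh
    have hA1 : (inner ℂ (φ₁ (star (Eω a)) Ψp) (φ₂ c' Ψp) : ℂ) = ωψ a c' := by
      rw [hφadj, ContinuousLinearMap.adjoint_inner_left, ← hrepψ, hEψ (Eω a) c',
        ← hωψ a c']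
    have hA2 : (inner ℂ (φ₁ (star (Eω a)) Ψp) Ψp : ℂ) = ω a 1 := by
      rw [hφadj, ContinuousLinearMap.adjoint_inner_left]
      have h1 := hrepψ (Eω a) 1
      simp only [map_one, ContinuousLinearMap.one_apply] at h1
      rw [← h1, hμν]
    rw [hx1, ← hSapp2, ContinuousLinearMap.adjoint_inner_right, map_sub, map_smul,
      hvν (star (Eω a)), show vν Λn = Ψp from hΨ.symm]
    simp only [inner_sub_left, inner_sub_right, inner_smul_left, inner_smul_right,
      hA1, hA2, hΨΨ, hΨφ, Complex.conj_conj]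
    ring
  constructor
  · -- triviality of the composition implies orthogonality
    intro h ξ₁ hξ₁ ξ₂ hξ₂
    obtain ⟨w₁, ⟨⟨x, hxmem, hw₁⟩, hΩw₁⟩, rfl⟩ := hξ₁
    obtain ⟨w₂, ⟨⟨y, hymem, hw₂⟩, hΨw₂⟩, rfl⟩ := hξ₂
    have hx0 : (inner ℂ Ωw x : ℂ) = 0 := by rw [← hΩP x, ← hw₁]; exact hΩw₁
    have hy0 : (inner ℂ Ψp y : ℂ) = 0 := by rw [← hΨQ y, ← hw₂]; exact hΨw₂
    have e1 : (ContinuousLinearMap.adjoint uν) w₁ = Ru x := by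
      rw [hw₁, huadjP, ← hRapp2, hx0, zero_smul, sub_zero]
    have e2 : (ContinuousLinearMap.adjoint vν) w₂ = Sv y := by
      rw [hw₂, hvadjQ, ← hSapp2, hy0, zero_smul, sub_zero]
    rw [e1, e2]
    have stepA : ∀ (c' : ↥C.commutant) (x' : Hw), x' ∈ Hμs →
        (inner ℂ (Ru x') (Sv (φ₂ c' Ψp)) : ℂ) = 0 := by
      intro c' x' hx'
      have gen : ∀ z ∈ (Set.range fun a : ↥A => π₁ a Ωw),
          ((innerSL ℂ (Sv (φ₂ c' Ψp))).comp Ru) z = 0 := by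
        rintro z ⟨a, rfl⟩
        have hk := hkey (star a) c'
        rw [star_star] at hk
        have h0 : (inner ℂ (Ru (π₁ a Ωw)) (Sv (φ₂ c' Ψp)) : ℂ) = 0 := by
          rw [hk, h (star a) c', hω1 (star a), hψ2 c', sub_self]
        simp only [ContinuousLinearMap.comp_apply, innerSL_apply_apply]
        rw [← inner_conj_symm, h0, map_zero]
      have hv := vanish_closure _ gen (hHμs ▸ hx')
      simp only [ContinuousLinearMap.comp_apply, innerSL_apply_apply] at hv
      rw [← inner_conj_symm, hv, map_zero]
    have stepB : ∀ y' ∈ Kξs, (inner ℂ (Ru x) (Sv y') : ℂ) = 0 := by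
      intro y' hy'
      have gen : ∀ z ∈ (Set.range fun c' : ↥C.commutant => φ₂ c' Ψp),
          ((innerSL ℂ (Ru x)).comp Sv) z = 0 := by
        rintro z ⟨c', rfl⟩
        simp only [ContinuousLinearMap.comp_apply, innerSL_apply_apply]
        exact stepA c' x hxmem
      have hv := vanish_closure _ gen (hKξs ▸ hy')
      simpa only [ContinuousLinearMap.comp_apply, innerSL_apply_apply] using hv
    exact stepB y hymem
  · -- orthogonality implies triviality of the composition
    intro h a c'
    have hx₁mem : π₁ (star a) Ωw - (inner ℂ Ωw (π₁ (star a) Ωw) : ℂ) • Ωw ∈ Hμs := by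
      rw [hHμs]
      apply Submodule.le_topologicalClosure
      refine Submodule.sub_mem _ ?_ (Submodule.smul_mem _ _ ?_)
      · exact Submodule.subset_span ⟨star a, rfl⟩
      · refine Submodule.subset_span ⟨1, ?_⟩
        simp only [map_one, ContinuousLinearMap.one_apply]
    have hy₁mem : φ₂ c' Ψp - (inner ℂ Ψp (φ₂ c' Ψp) : ℂ) • Ψp ∈ Kξs := by
      rw [hKξs]
      apply Submodule.le_topologicalClosure
      refine Submodule.sub_mem _ ?_ (Submodule.smul_mem _ _ ?_)
      · exact Submodule.subset_span ⟨c', rfl⟩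
      · refine Submodule.subset_span ⟨1, ?_⟩
        simp only [map_one, ContinuousLinearMap.one_apply]
    have m1 : Ru (π₁ (star a) Ωw) ∈ (ContinuousLinearMap.adjoint uν) ''
        {w : Hw | (∃ x ∈ Hμs, w = Pν x) ∧ (inner ℂ Ωw w : ℂ) = 0} := by
      refine ⟨Pν (π₁ (star a) Ωw - (inner ℂ Ωw (π₁ (star a) Ωw) : ℂ) • Ωw),
        ⟨⟨_, hx₁mem, rfl⟩, ?_⟩, ?_⟩
      · rw [hΩP, inner_sub_right, inner_smul_right, hΩΩ, mul_one, sub_self]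
      · rw [huadjP, hRapp2]
    have m2 : Sv (φ₂ c' Ψp) ∈ (ContinuousLinearMap.adjoint vν) ''
        {w : Kp | (∃ y ∈ Kξs, w = Qν y) ∧ (inner ℂ Ψp w : ℂ) = 0} := by
      refine ⟨Qν (φ₂ c' Ψp - (inner ℂ Ψp (φ₂ c' Ψp) : ℂ) • Ψp),
        ⟨⟨_, hy₁mem, rfl⟩, ?_⟩, ?_⟩
      · rw [hΨQ, inner_sub_right, inner_smul_right, hΨΨ, mul_one, sub_self]
      · rw [hvadjQ, hSapp2]
    have h0 := h _ m1 _ m2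
    rw [hkey a c'] at h0
    rw [← hω1 a, ← hψ2 c']
    exact sub_eq_zero.mp h0
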